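/- arXiv:1405.6192 — 3 statements merged into one kernel-verified Lean document; each statement's English description precedes it below -/
import Mathlib

section
/- Let p, q > 0 and let μ be a positive Borel measure on the unit ball 𝔹ₙ of ℂⁿ. If the quantity sup_{z∈𝔹ₙ} ∫_{𝔹ₙ} (1-|z|²)^{nq} / |1 - ⟨z,ω⟩|^{n(p+q)} dμ(ω) is finite, then μ is a p-Carleson measure, i.e., there is a constant C such that μ(Q_r(ζ)) ≤ C r^{np} for every ζ ∈ 𝕊ₙ and 0 < r < 1. -/
open Metric MeasureTheory

noncomputable section

instance {n : ℕ} : MeasurableSpace (EuclideanSpace ℂ (Fin n)) := borel _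
instance {n : ℕ} : BorelSpace (EuclideanSpace ℂ (Fin n)) := ⟨rfl⟩


/-- The Carleson tube `Q_r(ζ) = {z ∈ 𝔹ₙ : |1 - ⟨z,ζ⟩| < r}`. -/
def carlesonTube {n : ℕ} (ζ : EuclideanSpace ℂ (Fin n)) (r : ℝ) :
    Set (EuclideanSpace ℂ (Fin n)) :=
  {z ∈ ball (0 : EuclideanSpace ℂ (Fin n)) 1 | ‖1 - (inner ℂ ζ z : ℂ)‖ < r}

/-- If `sup_{z∈𝔹ₙ} ∫_{𝔹ₙ} (1-|z|²)^{nq} / |1-⟨z,ω⟩|^{n(p+q)} dμ(ω) < ∞`, then `μ` is a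
`p`-Carleson measure: `μ(Q_r(ζ)) ≤ C r^{np}` for all `ζ ∈ 𝕊ₙ` and `0 < r < 1`. -/
theorem carleson_of_integral_bound {n : ℕ} (hn : 0 < n) (p q : ℝ) (hp : 0 < p) (hq : 0 < q)
    (μ : Measure (EuclideanSpace ℂ (Fin n)))
    (hμ : ∃ M : ℝ, ∀ z ∈ ball (0 : EuclideanSpace ℂ (Fin n)) 1,
      (∫⁻ ω in ball (0 : EuclideanSpace ℂ (Fin n)) 1,
          ENNReal.ofReal ((1 - ‖z‖ ^ 2) ^ ((n : ℝ) * q) /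
            ‖1 - (inner ℂ ω z : ℂ)‖ ^ ((n : ℝ) * (p + q))) ∂μ)
        ≤ ENNReal.ofReal M) :
    ∃ C : ℝ, ∀ ζ ∈ sphere (0 : EuclideanSpace ℂ (Fin n)) 1, ∀ r : ℝ, 0 < r → r < 1 →
      μ (carlesonTube ζ r) ≤ ENNReal.ofReal (C * r ^ ((n : ℝ) * p)) := by
  obtain ⟨M, hM⟩ := hμ
  refine ⟨max M 0 * (3:ℝ) ^ ((n:ℝ) * (p + q)), ?_⟩
  intro ζ hζ r hr hr1
  have hζn : ‖ζ‖ = 1 := by simpa using hζ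
  set z : EuclideanSpace ℂ (Fin n) := ((1 - r : ℝ) : ℂ) • ζ with hzdef
  have hr0 : (0:ℝ) ≤ 1 - r := by linarith
  have hzn : ‖z‖ = 1 - r := by
    rw [hzdef, norm_smul, hζn, mul_one, Complex.norm_real, Real.norm_eq_abs,
      abs_of_nonneg hr0]
  have hzb : z ∈ ball (0 : EuclideanSpace ℂ (Fin n)) 1 := by
    rw [mem_ball_zero_iff, hzn]; linarith
  set s : ℝ := (n:ℝ) * (p + q) with hsdef
  set t : ℝ := (n:ℝ) * q with htdef
  have hs0 : (0:ℝ) ≤ s := by positivity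
  have ht0 : (0:ℝ) ≤ t := by positivity
  set c : ℝ := r ^ t / (3 * r) ^ s with hcdef
  have hc0 : 0 < c := by
    apply div_pos (Real.rpow_pos_of_pos hr t) (Real.rpow_pos_of_pos (by linarith) s)
  -- pointwise bound on the tube
  have hpt : ∀ ω ∈ carlesonTube ζ r,
      ENNReal.ofReal c ≤ ENNReal.ofReal ((1 - ‖z‖ ^ 2) ^ t /
        ‖1 - (inner ℂ ω z : ℂ)‖ ^ s) := by
    intro ω hω
    obtain ⟨hωb, hωr⟩ := hω
    have hωn : ‖ω‖ < 1 := by simpa [mem_ball_zero_iff] using hωb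
    have hωn0 : (0:ℝ) ≤ ‖ω‖ := norm_nonneg _
    set u : ℂ := (inner ℂ ζ ω : ℂ) with hudef
    have hu : ‖1 - u‖ < r := hωr
    have hiz : (inner ℂ ω z : ℂ) = ((1 - r : ℝ) : ℂ) * (starRingEnd ℂ u) := by
      rw [hzdef, inner_smul_right, hudef, ← inner_conj_symm ζ ω]
      simp
    have hDconj : ‖1 - (inner ℂ ω z : ℂ)‖
        = ‖1 - ((1 - r : ℝ) : ℂ) * u‖ := by
      rw [hiz]
      have : (1 : ℂ) - ((1 - r : ℝ) : ℂ) * (starRingEnd ℂ u)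
          = starRingEnd ℂ (1 - ((1 - r : ℝ) : ℂ) * u) := by
        simp [map_sub, map_mul, Complex.conj_ofReal]
      rw [this, Complex.norm_conj]
    have huabs : ‖u‖ ≤ 2 := by
      have h1 : ‖u‖ ≤ ‖u - 1‖ + ‖(1:ℂ)‖ := by
        simpa using norm_add_le (u - 1) 1
      have h2 : ‖u - 1‖ = ‖1 - u‖ := by
        rw [← neg_sub u 1, norm_neg]
      simp [h2] at h1
      linarith
    have hD3 : ‖1 - (inner ℂ ω z : ℂ)‖ ≤ 3 * r := by
      rw [hDconj]
      have hsplit : (1:ℂ) - ((1 - r : ℝ) : ℂ) * u = (1 - u) + (r : ℝ) * u := by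
        push_cast; ring
      calc ‖(1:ℂ) - ((1 - r : ℝ) : ℂ) * u‖
          ≤ ‖1 - u‖ + ‖(r : ℝ) * u‖ := by
            rw [hsplit]; exact norm_add_le _ _
        _ ≤ r + r * 2 := by
            have : ‖(r : ℝ) * u‖ = r * ‖u‖ := by
              rw [norm_mul, Complex.norm_real, Real.norm_eq_abs, abs_of_pos hr]
            rw [this]
            have := mul_le_mul_of_nonneg_left huabs hr.le
            linarith
        _ = 3 * r := by ring
    have hD0 : 0 < ‖1 - (inner ℂ ω z : ℂ)‖ := by
      have hcs : ‖(inner ℂ ω z : ℂ)‖ ≤ ‖ω‖ * ‖z‖ := norm_inner_le_norm ω z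
      have hlt : ‖ω‖ * ‖z‖ < 1 := by rw [hzn]; nlinarith
      have hv : ‖(inner ℂ ω z : ℂ)‖ < 1 := by
        exact lt_of_le_of_lt hcs hlt
      have htri : (1:ℝ) ≤ ‖1 - (inner ℂ ω z : ℂ)‖ + ‖(inner ℂ ω z : ℂ)‖ := by
        have := norm_add_le (1 - (inner ℂ ω z : ℂ)) (inner ℂ ω z : ℂ)
        simpa using this
      linarith
    -- real inequality
    apply ENNReal.ofReal_le_ofReal
    have hA : r ≤ 1 - ‖z‖ ^ 2 := by rw [hzn]; nlinarith
    have h1 : r ^ t ≤ (1 - ‖z‖ ^ 2) ^ t := Real.rpow_le_rpow hr.le hA ht0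
    have h2 : ‖1 - (inner ℂ ω z : ℂ)‖ ^ s ≤ (3 * r) ^ s :=
      Real.rpow_le_rpow (norm_nonneg _) hD3 hs0
    have h3 : 0 < ‖1 - (inner ℂ ω z : ℂ)‖ ^ s := Real.rpow_pos_of_pos hD0 s
    have h4 : (0:ℝ) ≤ (1 - ‖z‖ ^ 2) ^ t := Real.rpow_nonneg (by linarith) t
    exact div_le_div₀ h4 h1 h3 h2
  -- measurability of the tube
  have hQmeas : MeasurableSet (carlesonTube ζ r) := by
    have heq : carlesonTube ζ r = ball (0 : EuclideanSpace ℂ (Fin n)) 1 ∩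
        {w | ‖1 - (inner ℂ ζ w : ℂ)‖ < r} := rfl
    rw [heq]
    refine measurableSet_ball.inter ?_
    have hcont : Continuous fun w : EuclideanSpace ℂ (Fin n) =>
        ‖1 - (inner ℂ ζ w : ℂ)‖ :=
      continuous_norm.comp (continuous_const.sub (continuous_const.inner continuous_id))
    exact (isOpen_lt hcont continuous_const).measurableSet
  have hsub : carlesonTube ζ r ⊆ ball (0 : EuclideanSpace ℂ (Fin n)) 1 := fun ω h => h.1
  have hchain : μ (carlesonTube ζ r) * ENNReal.ofReal c ≤ ENNReal.ofReal M := by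
    calc μ (carlesonTube ζ r) * ENNReal.ofReal c
        = ∫⁻ _ in carlesonTube ζ r, ENNReal.ofReal c ∂μ := by
          rw [setLIntegral_const, mul_comm]
      _ ≤ ∫⁻ ω in carlesonTube ζ r, ENNReal.ofReal ((1 - ‖z‖ ^ 2) ^ t /
            ‖1 - (inner ℂ ω z : ℂ)‖ ^ s) ∂μ := setLIntegral_mono' hQmeas hpt
      _ ≤ ∫⁻ ω in ball (0 : EuclideanSpace ℂ (Fin n)) 1,
            ENNReal.ofReal ((1 - ‖z‖ ^ 2) ^ t /
            ‖1 - (inner ℂ ω z : ℂ)‖ ^ s) ∂μ := lintegral_mono_set hsub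
      _ ≤ ENNReal.ofReal M := hM z hzb
  have hle : μ (carlesonTube ζ r) ≤ ENNReal.ofReal M / ENNReal.ofReal c := by
    rw [ENNReal.le_div_iff_mul_le (Or.inl (by simp [hc0, ENNReal.ofReal_pos.mpr hc0, ne_of_gt]))
      (Or.inl ENNReal.ofReal_ne_top)]
    exact hchain
  refine hle.trans ?_
  have hMmax : ENNReal.ofReal M / ENNReal.ofReal c ≤ ENNReal.ofReal (max M 0 / c) := by
    rw [ENNReal.ofReal_div_of_pos hc0]
    exact ENNReal.div_le_div_right (ENNReal.ofReal_le_ofReal (le_max_left M 0)) _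
  refine hMmax.trans (le_of_eq ?_)
  congr 1
  have hsplit : s = (n:ℝ) * p + t := by rw [hsdef, htdef]; ring
  have h3r : (3 * r) ^ s = (3:ℝ) ^ s * r ^ s := Real.mul_rpow (by norm_num) hr.le
  have hrs : r ^ s = r ^ ((n:ℝ) * p) * r ^ t := by
    rw [hsplit, Real.rpow_add hr]
  rw [hcdef, div_div_eq_mul_div, h3r, hrs]
  have hrt : r ^ t ≠ 0 := ne_of_gt (Real.rpow_pos_of_pos hr t)
  field_simp
end
end

section
/- For z, ω in the closed unit ball of ℂⁿ, the 'square-root triangle inequality' holds: |1 - ⟨ω,z⟩|^{1/2} ≥ |1 - ⟨z,ζ⟩|^{1/2} - |1 - ⟨ω,ζ⟩|^{1/2} for every ζ on the unit sphere; equivalently, d(z,w) = |1 - ⟨z,w⟩|^{1/2} satisfies the triangle inequality on the closed unit ball. -/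
open Metric

noncomputable section

/-- The positive semidefinite Hermitian form `B(x,y) = ⟪x,y⟫ - ⟪x,u⟫⟪u,y⟫` for `‖u‖ ≤ 1`. -/
def coreB {n : ℕ} (u : EuclideanSpace ℂ (Fin n)) (hu : ‖u‖ ≤ 1) :
    PreInnerProductSpace.Core ℂ (EuclideanSpace ℂ (Fin n)) where
  inner x y := (inner ℂ x y : ℂ) - (inner ℂ x u : ℂ) * (inner ℂ u y : ℂ)
  conj_inner_symm x y := by
    simp only [map_sub, map_mul, inner_conj_symm]
    ring
  re_inner_nonneg x := by
    have h1 : (inner ℂ x u : ℂ) * (inner ℂ u x : ℂ) = (‖(inner ℂ x u : ℂ)‖ : ℂ) ^ 2 := by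
      rw [← inner_conj_symm u x, RCLike.mul_conj]; rfl
    have h2 : ‖(inner ℂ x u : ℂ)‖ ≤ ‖x‖ := by
      calc ‖(inner ℂ x u : ℂ)‖ ≤ ‖x‖ * ‖u‖ := norm_inner_le_norm x u
        _ ≤ ‖x‖ * 1 := mul_le_mul_of_nonneg_left hu (norm_nonneg x)
        _ = ‖x‖ := mul_one _
    have h3 : (RCLike.re ((inner ℂ x x : ℂ)) : ℝ) = ‖x‖ ^ 2 := by
      rw [← inner_self_eq_norm_sq (𝕜 := ℂ) x]
    show 0 ≤ RCLike.re ((inner ℂ x x : ℂ) - (inner ℂ x u : ℂ) * (inner ℂ u x : ℂ))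
    rw [map_sub, h1, h3]
    have h4 : RCLike.re ((‖(inner ℂ x u : ℂ)‖ : ℂ) ^ 2) = ‖(inner ℂ x u : ℂ)‖ ^ 2 := by
      norm_cast
    rw [h4]
    nlinarith [norm_nonneg (inner ℂ x u : ℂ), norm_nonneg x]
  add_left x y z := by
    simp only [inner_add_left]
    ring
  smul_left x y r := by
    simp only [inner_smul_left]
    ring

/-- Cauchy–Schwarz for the form `B`. -/
lemma absB_le {n : ℕ} (u x y : EuclideanSpace ℂ (Fin n))
    (hu : ‖u‖ ≤ 1) (hx : ‖x‖ ≤ 1) (hy : ‖y‖ ≤ 1) :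
    ‖(inner ℂ x y : ℂ) - (inner ℂ x u : ℂ) * (inner ℂ u y : ℂ)‖ ^ 2 ≤
      (1 - ‖(inner ℂ x u : ℂ)‖ ^ 2) * (1 - ‖(inner ℂ u y : ℂ)‖ ^ 2) := by
  have key := InnerProductSpace.Core.inner_mul_inner_self_le (𝕜 := ℂ)
      (F := EuclideanSpace ℂ (Fin n)) (c := coreB u hu) x y
  have hBxy : (coreB u hu).inner x y = (inner ℂ x y : ℂ) - (inner ℂ x u : ℂ) * (inner ℂ u y : ℂ) := rfl
  have hsymm : ‖(coreB u hu).inner y x‖ = ‖(coreB u hu).inner x y‖ := by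
    rw [← (coreB u hu).conj_inner_symm x y, RCLike.norm_conj]
  have hxx : RCLike.re ((coreB u hu).inner x x) = ‖x‖ ^ 2 - ‖(inner ℂ x u : ℂ)‖ ^ 2 := by
    have h1 : (inner ℂ x u : ℂ) * (inner ℂ u x : ℂ) = (‖(inner ℂ x u : ℂ)‖ : ℂ) ^ 2 := by
      rw [← inner_conj_symm u x, RCLike.mul_conj]; rfl
    have h3 : (RCLike.re ((inner ℂ x x : ℂ)) : ℝ) = ‖x‖ ^ 2 := by
      rw [← inner_self_eq_norm_sq (𝕜 := ℂ) x]
    show RCLike.re ((inner ℂ x x : ℂ) - (inner ℂ x u : ℂ) * (inner ℂ u x : ℂ)) = _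
    rw [map_sub, h1, h3]; simp; norm_cast
  have hyy : RCLike.re ((coreB u hu).inner y y) = ‖y‖ ^ 2 - ‖(inner ℂ u y : ℂ)‖ ^ 2 := by
    have h1 : (inner ℂ y u : ℂ) * (inner ℂ u y : ℂ) = (‖(inner ℂ u y : ℂ)‖ : ℂ) ^ 2 := by
      rw [← inner_conj_symm y u, RCLike.conj_mul]; rfl
    have h3 : (RCLike.re ((inner ℂ y y : ℂ)) : ℝ) = ‖y‖ ^ 2 := by
      rw [← inner_self_eq_norm_sq (𝕜 := ℂ) y]
    show RCLike.re ((inner ℂ y y : ℂ) - (inner ℂ y u : ℂ) * (inner ℂ u y : ℂ)) = _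
    rw [map_sub, h1, h3]; simp; norm_cast
  rw [hsymm, hxx, hyy, hBxy] at key
  have hx2 : ‖x‖ ^ 2 ≤ 1 := by nlinarith [norm_nonneg x]
  have hy2 : ‖y‖ ^ 2 ≤ 1 := by nlinarith [norm_nonneg y]
  have hxu : ‖(inner ℂ x u : ℂ)‖ ^ 2 ≤ ‖x‖ ^ 2 := by
    have h := norm_inner_le_norm (𝕜 := ℂ) x u
    have h' : ‖(inner ℂ x u : ℂ)‖ ≤ ‖x‖ := le_trans h (by nlinarith [norm_nonneg x])
    exact pow_le_pow_left₀ (norm_nonneg _) h' 2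
  have huy : ‖(inner ℂ u y : ℂ)‖ ^ 2 ≤ ‖y‖ ^ 2 := by
    have h := norm_inner_le_norm (𝕜 := ℂ) u y
    have h' : ‖(inner ℂ u y : ℂ)‖ ≤ ‖y‖ := le_trans h (by nlinarith [norm_nonneg y])
    exact pow_le_pow_left₀ (norm_nonneg _) h' 2
  calc ‖(inner ℂ x y : ℂ) - (inner ℂ x u : ℂ) * (inner ℂ u y : ℂ)‖ ^ 2
      = ‖(inner ℂ x y : ℂ) - (inner ℂ x u : ℂ) * (inner ℂ u y : ℂ)‖ *
        ‖(inner ℂ x y : ℂ) - (inner ℂ x u : ℂ) * (inner ℂ u y : ℂ)‖ := sq _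
    _ ≤ (‖x‖ ^ 2 - ‖(inner ℂ x u : ℂ)‖ ^ 2) * (‖y‖ ^ 2 - ‖(inner ℂ u y : ℂ)‖ ^ 2) := key
    _ ≤ (1 - ‖(inner ℂ x u : ℂ)‖ ^ 2) * (1 - ‖(inner ℂ u y : ℂ)‖ ^ 2) := by nlinarith

/-- The non-isotropic pseudo-metric `d(z,w) = |1 - ⟨z,w⟩|^{1/2}` satisfies the triangle
inequality on the closed unit ball of `ℂⁿ`; in particular, for `z, ω` in the closed ball
and `ζ` on the unit sphere, `|1-⟨ω,z⟩|^{1/2} ≥ |1-⟨z,ζ⟩|^{1/2} - |1-⟨ω,ζ⟩|^{1/2}`. -/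
theorem nonisotropic_sqrt_triangle {n : ℕ}
    (z w u : EuclideanSpace ℂ (Fin n))
    (hz : z ∈ closedBall (0 : EuclideanSpace ℂ (Fin n)) 1)
    (hw : w ∈ closedBall (0 : EuclideanSpace ℂ (Fin n)) 1)
    (hu : u ∈ closedBall (0 : EuclideanSpace ℂ (Fin n)) 1) :
    Real.sqrt (‖1 - (inner ℂ w z : ℂ)‖) ≤
      Real.sqrt (‖1 - (inner ℂ u z : ℂ)‖) +
        Real.sqrt (‖1 - (inner ℂ w u : ℂ)‖) := by
  rw [mem_closedBall, dist_zero_right] at hz hw hu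
  set a := ‖(1 : ℂ) - (inner ℂ u z : ℂ)‖ with ha
  set b := ‖(1 : ℂ) - (inner ℂ w u : ℂ)‖ with hb
  have ha0 : 0 ≤ a := norm_nonneg _
  have hb0 : 0 ≤ b := norm_nonneg _
  set p := ‖(inner ℂ w u : ℂ)‖ with hp
  set q := ‖(inner ℂ u z : ℂ)‖ with hq
  have hp1 : p ≤ 1 := by
    calc p ≤ ‖w‖ * ‖u‖ := norm_inner_le_norm w u
      _ ≤ 1 * 1 := mul_le_mul hw hu (norm_nonneg u) zero_le_one
      _ = 1 := one_mul 1
  have hq1 : q ≤ 1 := by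
    calc q ≤ ‖u‖ * ‖z‖ := norm_inner_le_norm u z
      _ ≤ 1 * 1 := mul_le_mul hu hz (norm_nonneg z) zero_le_one
      _ = 1 := one_mul 1
  have hp0 : 0 ≤ p := norm_nonneg _
  have hq0 : 0 ≤ q := norm_nonneg _
  have hpb : 1 - p ≤ b := by
    have := norm_sub_norm_le (1 : ℂ) ((inner ℂ w u : ℂ))
    simpa using this
  have hqa : 1 - q ≤ a := by
    have := norm_sub_norm_le (1 : ℂ) ((inner ℂ u z : ℂ))
    simpa using this
  have hp2 : 1 - p ^ 2 ≤ 2 * b := by nlinarith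
  have hq2 : 1 - q ^ 2 ≤ 2 * a := by nlinarith
  have hcs := absB_le u w z hu hw hz
  have hcs' : ‖(inner ℂ w z : ℂ) - (inner ℂ w u : ℂ) * (inner ℂ u z : ℂ)‖ ^ 2 ≤
      2 * b * (2 * a) := by
    have hmul : (1 - p ^ 2) * (1 - q ^ 2) ≤ 2 * b * (2 * a) :=
      mul_le_mul hp2 hq2 (by nlinarith) (by positivity)
    exact le_trans hcs hmul
  have hcs2 : ‖(inner ℂ w z : ℂ) - (inner ℂ w u : ℂ) * (inner ℂ u z : ℂ)‖ ≤
      2 * Real.sqrt a * Real.sqrt b := by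
    have h2 : (2 * Real.sqrt a * Real.sqrt b) ^ 2 = 2 * b * (2 * a) := by
      rw [mul_pow, mul_pow, Real.sq_sqrt ha0, Real.sq_sqrt hb0]
      ring
    have h3 := Real.sqrt_le_sqrt (le_trans hcs' (le_of_eq h2.symm))
    rwa [Real.sqrt_sq (norm_nonneg _), Real.sqrt_sq (by positivity)] at h3
  have hident : (1 : ℂ) - (inner ℂ w z : ℂ) =
      (1 - (inner ℂ w u : ℂ)) + (inner ℂ w u : ℂ) * (1 - (inner ℂ u z : ℂ)) +
        -((inner ℂ w z : ℂ) - (inner ℂ w u : ℂ) * (inner ℂ u z : ℂ)) := by ring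
  have hmain : ‖(1 : ℂ) - (inner ℂ w z : ℂ)‖ ≤ (Real.sqrt a + Real.sqrt b) ^ 2 := by
    calc ‖(1 : ℂ) - (inner ℂ w z : ℂ)‖
        ≤ ‖(1 : ℂ) - (inner ℂ w u : ℂ)‖ +
            ‖(inner ℂ w u : ℂ) * (1 - (inner ℂ u z : ℂ))‖ +
            ‖-((inner ℂ w z : ℂ) - (inner ℂ w u : ℂ) * (inner ℂ u z : ℂ))‖ := by
          rw [hident]
          exact le_trans (norm_add_le _ _) (add_le_add_left (norm_add_le _ _) _)
      _ ≤ b + 1 * a + 2 * Real.sqrt a * Real.sqrt b := by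
          rw [norm_mul, norm_neg]
          have : p * a ≤ 1 * a := mul_le_mul_of_nonneg_right hp1 ha0
          linarith [hcs2]
      _ ≤ (Real.sqrt a + Real.sqrt b) ^ 2 := by
          have hsa : Real.sqrt a ^ 2 = a := Real.sq_sqrt ha0
          have hsb : Real.sqrt b ^ 2 = b := Real.sq_sqrt hb0
          nlinarith
  calc Real.sqrt ‖(1 : ℂ) - (inner ℂ w z : ℂ)‖
      ≤ Real.sqrt ((Real.sqrt a + Real.sqrt b) ^ 2) := Real.sqrt_le_sqrt hmain
    _ = Real.sqrt a + Real.sqrt b := Real.sqrt_sq (by positivity)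
end
end

section
/- For f holomorphic on 𝔹ₙ and z ∈ 𝔹ₙ, the identity |z|² |∇̃f(z)|² = (1-|z|²) [ (1-|z|²)|Rf(z)|² + Σ_{i<j} |T_{i,j}f(z)|² ] holds, where T_{i,j}f = conj(z_j) ∂f/∂z_i − conj(z_i) ∂f/∂z_j, Rf(z) = Σ z_k ∂f/∂z_k, and |∇̃f(z)|² = (1-|z|²)(|∇f(z)|² − |Rf(z)|²). -/
open Metric

noncomputable section

private lemma lagrange_complex {n : ℕ} (z a : Fin n → ℂ) :
    ∑ p : Fin n × Fin n,
      ((starRingEnd ℂ) (z p.2) * a p.1 - (starRingEnd ℂ) (z p.1) * a p.2) *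
        (starRingEnd ℂ) ((starRingEnd ℂ) (z p.2) * a p.1 - (starRingEnd ℂ) (z p.1) * a p.2) =
    2 * ((∑ k, z k * (starRingEnd ℂ) (z k)) * (∑ k, a k * (starRingEnd ℂ) (a k)) -
      (∑ k, z k * a k) * (starRingEnd ℂ) (∑ k, z k * a k)) := by
  rw [Fintype.sum_prod_type]
  have h : ∀ i j : Fin n,
      ((starRingEnd ℂ) (z j) * a i - (starRingEnd ℂ) (z i) * a j) *
        (starRingEnd ℂ) ((starRingEnd ℂ) (z j) * a i - (starRingEnd ℂ) (z i) * a j) =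
      (a i * (starRingEnd ℂ) (a i)) * (z j * (starRingEnd ℂ) (z j)) +
      (z i * (starRingEnd ℂ) (z i)) * (a j * (starRingEnd ℂ) (a j)) -
      (z i * a i) * ((starRingEnd ℂ) (z j) * (starRingEnd ℂ) (a j)) -
      ((starRingEnd ℂ) (z i) * (starRingEnd ℂ) (a i)) * (z j * a j) := by
    intro i j; simp only [map_sub, map_mul, Complex.conj_conj]; ring
  simp only [h, Finset.sum_sub_distrib, Finset.sum_add_distrib, ← Finset.mul_sum,
    ← Finset.sum_mul, map_sum, map_mul]
  ring

private lemma double_sum {n : ℕ} (F : Fin n × Fin n → ℂ) (hd : ∀ i, F (i, i) = 0)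
    (hs : ∀ p : Fin n × Fin n, F p.swap = F p) :
    ∑ p : Fin n × Fin n, F p =
      2 * ∑ p ∈ Finset.univ.filter (fun p : Fin n × Fin n => p.1 < p.2), F p := by
  rw [← Finset.sum_filter_add_sum_filter_not Finset.univ
    (fun p : Fin n × Fin n => p.1 < p.2) F]
  have h1 : ∑ p ∈ Finset.univ.filter (fun p : Fin n × Fin n => ¬ p.1 < p.2), F p
      = ∑ p ∈ Finset.univ.filter (fun p : Fin n × Fin n => p.2 < p.1), F p := by
    refine (Finset.sum_subset ?_ ?_).symm
    · intro p hp; simp only [Finset.mem_filter, Finset.mem_univ, true_and] at *; omega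
    · intro p hp hnp
      simp only [Finset.mem_filter, Finset.mem_univ, true_and] at hp hnp
      have h12 : p.1 = p.2 := by omega
      have hpe : p = (p.1, p.1) := by rw [Prod.ext_iff]; exact ⟨rfl, h12.symm⟩
      rw [hpe, hd]
  have h2 : ∑ p ∈ Finset.univ.filter (fun p : Fin n × Fin n => p.2 < p.1), F p
      = ∑ p ∈ Finset.univ.filter (fun p : Fin n × Fin n => p.1 < p.2), F p := by
    apply Finset.sum_nbij' (fun p => p.swap) (fun p => p.swap) <;> simp [hs]
  rw [h1, h2]; ring

private lemma lagrange_real {n : ℕ} (z a : Fin n → ℂ) :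
    ∑ p ∈ Finset.univ.filter (fun p : Fin n × Fin n => p.1 < p.2),
      ‖(starRingEnd ℂ) (z p.2) * a p.1 - (starRingEnd ℂ) (z p.1) * a p.2‖ ^ 2 =
    (∑ k, ‖z k‖ ^ 2) * (∑ k, ‖a k‖ ^ 2) - ‖∑ k, z k * a k‖ ^ 2 := by
  have key : ∀ w : ℂ, ((‖w‖ : ℝ) : ℂ) ^ 2 = w * (starRingEnd ℂ) w := by
    intro w
    rw [← Complex.ofReal_pow, Complex.mul_conj, Complex.normSq_eq_norm_sq]
  apply Complex.ofReal_injective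
  push_cast
  simp only [key]
  have hfull := lagrange_complex z a
  rw [double_sum _ (fun i => by ring)
    (fun p => by simp only [Prod.swap, map_sub, map_mul]; ring)] at hfull
  have := mul_left_cancel₀ (two_ne_zero' ℂ) hfull
  rw [this]

/-- For `f` holomorphic on `𝔹ₙ` and `z ∈ 𝔹ₙ`, with `∂_j f(z)` the complex partial
derivatives, `Rf(z) = Σ z_k ∂_k f(z)` the radial derivative,
`T_{ij}f = conj(z_j)∂_i f − conj(z_i)∂_j f` the tangential derivatives, and the invariant
gradient given by `|∇̃f(z)|² = (1-|z|²)(|∇f(z)|² − |Rf(z)|²)`, one has the identity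
`|z|²|∇̃f(z)|² = (1-|z|²)[(1-|z|²)|Rf(z)|² + Σ_{i<j}|T_{ij}f(z)|²]`. -/
theorem norm_sq_invGradient_identity {n : ℕ}
    (f : EuclideanSpace ℂ (Fin n) → ℂ)
    (hf : DifferentiableOn ℂ f (ball (0 : EuclideanSpace ℂ (Fin n)) 1))
    (z : EuclideanSpace ℂ (Fin n)) (hz : z ∈ ball (0 : EuclideanSpace ℂ (Fin n)) 1) :
    ‖z‖ ^ 2 * ((1 - ‖z‖ ^ 2) *
        ((∑ j : Fin n, ‖fderiv ℂ f z (EuclideanSpace.single j 1)‖ ^ 2) -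
          ‖∑ k : Fin n, z k * fderiv ℂ f z (EuclideanSpace.single k 1)‖ ^ 2)) =
      (1 - ‖z‖ ^ 2) *
        ((1 - ‖z‖ ^ 2) * ‖∑ k : Fin n, z k * fderiv ℂ f z (EuclideanSpace.single k 1)‖ ^ 2 +
          ∑ p ∈ Finset.univ.filter (fun p : Fin n × Fin n => p.1 < p.2),
            ‖(starRingEnd ℂ) (z p.2) * fderiv ℂ f z (EuclideanSpace.single p.1 1) -
              (starRingEnd ℂ) (z p.1) * fderiv ℂ f z (EuclideanSpace.single p.2 1)‖ ^ 2) := by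
  set a : Fin n → ℂ := fun k => fderiv ℂ f z (EuclideanSpace.single k 1) with ha
  have hnorm : ‖z‖ ^ 2 = ∑ k, ‖z k‖ ^ 2 := by
    rw [EuclideanSpace.norm_eq, Real.sq_sqrt]
    positivity
  rw [lagrange_real (fun k => z k) a, hnorm]
  ring
end
end
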